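/- Let q ≥ 1 be an integer and ε ∈ (2/(5(2q−1)), 7/5]. Then every trajectory feasible for (2q, −2/5 + ε) has cost at least 8(q+2)/25 + 8q/(25(2q−1)²). -/

import Mathlib

/-- A trajectory `x : ℕ → ℝ` is feasible for `(p, z)` if `x 0 = 0`, `x p = z`,
`x t ∈ [-1,1]` for all `t ≤ p`, and `|x (t+1) - x t| ≤ 4/5` for all `t < p`. -/
def Feasible (p : ℕ) (z : ℝ) (x : ℕ → ℝ) : Prop :=
  x 0 = 0 ∧ x p = z ∧ (∀ t ≤ p, x t ∈ Set.Icc (-1 : ℝ) 1) ∧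
    ∀ t < p, |x (t + 1) - x t| ≤ 4 / 5

/-- `ξ t = 4/5` if `t` is odd and `-4/5` if `t` is even. -/
noncomputable def xiTgt (t : ℕ) : ℝ := if Odd t then 4 / 5 else -(4 / 5)

/-- The cost of a trajectory: `∑_{t=0}^{p} (x t - ξ t)^2`. -/
noncomputable def cost (p : ℕ) (x : ℕ → ℝ) : ℝ :=
  ∑ t ∈ Finset.range (p + 1), (x t - xiTgt t) ^ 2

noncomputable def Uc (q : ℕ) : ℝ := 4*((q:ℝ)-1)/(5*(2*(q:ℝ)-1))
noncomputable def Vc (q : ℕ) : ℝ := 4*(q:ℝ)/(5*(2*(q:ℝ)-1))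

noncomputable def abar (q t : ℕ) : ℝ := if Odd t then Uc q else Vc q

noncomputable def lam (q t : ℕ) : ℝ :=
  if Odd t then 4*(2*(q:ℝ) - 1 - (t:ℝ))/(5*(2*(q:ℝ)-1)) else 4*(t:ℝ)/(5*(2*(q:ℝ)-1))

noncomputable def gfun (q m : ℕ) : ℝ :=
  if Even m then (m:ℝ)*(q:ℝ) else ((m:ℝ)+1)*(q:ℝ) - (m:ℝ) - 1

noncomputable def hfun (q m : ℕ) : ℝ :=
  if Even m then ((m:ℝ)/2) * ((Uc q)^2 + (Vc q)^2)
  else (((m:ℝ)+1)/2) * (Uc q)^2 + (((m:ℝ)-1)/2) * (Vc q)^2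

lemma lam_rec (q m : ℕ) : lam q m + lam q (m+1) = 2 * abar q (m+1) := by
  rcases Nat.even_or_odd m with h | h
  · simp only [lam, abar, Uc, if_pos (Even.add_one h), if_neg (Nat.not_odd_iff_even.mpr h)]
    push_cast; ring
  · simp only [lam, abar, Vc, if_pos h,
      if_neg (Nat.not_odd_iff_even.mpr (Odd.add_one h))]
    push_cast; ring

lemma gfun_step (q m : ℕ) (hD : (2*(q:ℝ)-1) ≠ 0) :
    16/(25*(2*(q:ℝ)-1)) * (gfun q (m+1) - gfun q m) = 4/5 * lam q (m+1) := by
  rcases Nat.even_or_odd m with h | h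
  · have h1 : Odd (m+1) := Even.add_one h
    simp only [gfun, lam, if_pos h, if_pos h1, if_neg (Nat.not_even_iff_odd.mpr h1)]
    push_cast; field_simp; ring
  · have h1 : Even (m+1) := Odd.add_one h
    simp only [gfun, lam, if_pos h1, if_neg (Nat.not_even_iff_odd.mpr h),
      if_neg (Nat.not_odd_iff_even.mpr h1)]
    push_cast; field_simp; ring

lemma hfun_step (q m : ℕ) : hfun q (m+1) = hfun q m + (abar q (m+1))^2 := by
  rcases Nat.even_or_odd m with h | h
  · have h1 : Odd (m+1) := Even.add_one h
    simp only [hfun, abar, if_pos h, if_pos h1, if_neg (Nat.not_even_iff_odd.mpr h1)]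
    push_cast; ring
  · have h1 : Even (m+1) := Odd.add_one h
    simp only [hfun, abar, if_pos h1, if_neg (Nat.not_even_iff_odd.mpr h),
      if_neg (Nat.not_odd_iff_even.mpr h1)]
    push_cast; ring

lemma lam_nonneg (q t : ℕ) (hq : 1 ≤ q) (ht : t + 1 ≤ 2*q) : 0 ≤ lam q t := by
  have hQ : (1:ℝ) ≤ (q:ℝ) := by exact_mod_cast hq
  have hD : (0:ℝ) < 5*(2*(q:ℝ)-1) := by linarith
  rcases Nat.even_or_odd t with h | h
  · simp only [lam, if_neg (Nat.not_odd_iff_even.mpr h)]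
    apply div_nonneg _ hD.le
    positivity
  · simp only [lam, if_pos h]
    apply div_nonneg _ hD.le
    have : (t:ℝ) + 1 ≤ 2*(q:ℝ) := by exact_mod_cast ht
    linarith

lemma key (q : ℕ) (hq : 1 ≤ q) (a : ℕ → ℝ)
    (hpair : ∀ t, t + 1 ≤ 2*q → 4/5 ≤ a t + a (t+1)) :
    ∀ m, m + 1 ≤ 2*q →
      16/(25*(2*(q:ℝ)-1)) * gfun q m - hfun q m ≤
        (∑ t ∈ Finset.range m, a (t+1) ^ 2) + lam q m * a (m+1) := by
  intro m
  induction m with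
  | zero => intro _; simp [gfun, hfun, lam]
  | succ m ih =>
    intro hm1
    have H := ih (by omega)
    have hQ : (1:ℝ) ≤ (q:ℝ) := by exact_mod_cast hq
    have hD : (2*(q:ℝ)-1) ≠ 0 := by intro h; nlinarith
    have hrec := lam_rec q m
    have hg := gfun_step q m hD
    have hh := hfun_step q m
    have hpos : 0 ≤ lam q (m+1) := lam_nonneg q (m+1) hq (by omega)
    have hp := hpair (m+1) (by omega)
    have hsq : (lam q m + lam q (m+1)) * a (m+1) - (abar q (m+1))^2 ≤ a (m+1) ^ 2 := by
      rw [hrec]; nlinarith [sq_nonneg (a (m+1) - abar q (m+1))]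
    have hmul : 4/5 * lam q (m+1) ≤ lam q (m+1) * (a (m+1) + a (m+2)) := by
      calc 4/5 * lam q (m+1) = lam q (m+1) * (4/5) := by ring
      _ ≤ lam q (m+1) * (a (m+1) + a (m+2)) := by
          exact mul_le_mul_of_nonneg_left hp hpos
    rw [Finset.sum_range_succ]
    nlinarith [H, hsq, hmul, hg, hh]

theorem stmt_4 (q : ℕ) (hq : 1 ≤ q) (ε : ℝ)
    (hε : ε ∈ Set.Ioc (2 / (5 * (2 * (q : ℝ) - 1))) (7 / 5)) :
    ∀ x : ℕ → ℝ, Feasible (2 * q) (-(2 / 5) + ε) x →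
      8 * ((q : ℝ) + 2) / 25 + 8 * (q : ℝ) / (25 * (2 * (q : ℝ) - 1) ^ 2) ≤ cost (2 * q) x := by
  intro x hx
  obtain ⟨hx0, hxp, hbox, hstep⟩ := hx
  obtain ⟨hε1, hε2⟩ := hε
  have hQ : (1:ℝ) ≤ (q:ℝ) := by exact_mod_cast hq
  have hDpos : (0:ℝ) < 2*(q:ℝ)-1 := by linarith
  have hD : (2*(q:ℝ)-1) ≠ 0 := ne_of_gt hDpos
  set a : ℕ → ℝ := fun t => (-1)^t * (x t - xiTgt t) with ha
  -- pair inequality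
  have hpair : ∀ t, t + 1 ≤ 2*q → 4/5 ≤ a t + a (t+1) := by
    intro t ht
    have hs := hstep t (by omega)
    rw [abs_le] at hs
    rcases Nat.even_or_odd t with h | h
    · have h1 : Odd (t+1) := Even.add_one h
      simp only [ha, xiTgt, if_pos h1, if_neg (Nat.not_odd_iff_even.mpr h),
        Even.neg_one_pow h, Odd.neg_one_pow h1]
      linarith [hs.1]
    · have h1 : Even (t+1) := Odd.add_one h
      simp only [ha, xiTgt, if_pos h, if_neg (Nat.not_odd_iff_even.mpr h1),
        Even.neg_one_pow h1, Odd.neg_one_pow h]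
      linarith [hs.2]
  -- cost as sum of a t ^ 2
  have hsq : ∀ t, (x t - xiTgt t)^2 = a t ^ 2 := by
    intro t
    rcases Nat.even_or_odd t with h | h
    · simp only [ha, Even.neg_one_pow h, one_mul]
    · simp only [ha, Odd.neg_one_pow h]; ring
  have hcost : cost (2*q) x = ∑ t ∈ Finset.range (2*q+1), a t ^ 2 := by
    unfold cost
    exact Finset.sum_congr rfl (fun t _ => hsq t)
  have ha0 : a 0 = 4/5 := by
    simp only [ha]
    norm_num [xiTgt, hx0, Nat.odd_iff]
  have he2q : Even (2*q) := even_two_mul q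
  have ha2q : a (2*q) = 2/5 + ε := by
    simp only [ha, Even.neg_one_pow he2q, one_mul, hxp, xiTgt,
      if_neg (Nat.not_odd_iff_even.mpr he2q)]
    ring
  -- decompose the cost sum
  have hm : 2*q - 1 + 1 = 2*q := by omega
  have hdec : cost (2*q) x
      = a 0 ^ 2 + ((∑ t ∈ Finset.range (2*q-1), a (t+1) ^ 2) + a (2*q) ^ 2) := by
    rw [hcost, Finset.sum_range_succ' (fun t => a t ^ 2) (2*q), ← hm,
      Finset.sum_range_succ (fun t => a (t+1) ^ 2) (2*q-1), hm]
    ring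
  -- apply key at m = 2q-1
  have hK := key q hq a hpair (2*q-1) (by omega)
  have hodd : Odd (2*q-1) := Nat.odd_iff.mpr (by omega)
  have hcast : ((2*q-1 : ℕ):ℝ) = 2*(q:ℝ) - 1 := by
    push_cast [Nat.cast_sub (show 1 ≤ 2*q by omega)]; ring
  have hlamlast : lam q (2*q-1) = 0 := by
    simp only [lam, if_pos hodd, hcast]; ring
  rw [hlamlast, zero_mul, add_zero] at hK
  have hg : gfun q (2*q-1) = 2*(q:ℝ)*((q:ℝ)-1) := by
    simp only [gfun, if_neg (Nat.not_even_iff_odd.mpr hodd), hcast]; ring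
  have hh : hfun q (2*q-1) = (q:ℝ) * (Uc q)^2 + ((q:ℝ)-1) * (Vc q)^2 := by
    simp only [hfun, if_neg (Nat.not_even_iff_odd.mpr hodd), hcast]; ring
  rw [hg, hh] at hK
  -- endpoint: a(2q)^2 ≥ Vc^2
  have hV : Vc q = 2/5 + 2/(5*(2*(q:ℝ)-1)) := by
    unfold Vc; field_simp [show (q:ℝ)*2-1 ≠ 0 by intro h; exact hD (by linarith)]; ring
  have hV0 : 0 < Vc q := by rw [hV]; positivity
  have hVs : Vc q ≤ 2/5 + ε := by rw [hV]; linarith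
  have hend : (Vc q)^2 ≤ a (2*q) ^ 2 := by
    rw [ha2q]; nlinarith
  -- final arithmetic
  rw [hdec, ha0]
  have hfinal : 8 * ((q:ℝ) + 2) / 25 + 8 * (q:ℝ) / (25 * (2 * (q:ℝ) - 1) ^ 2)
      = (4/5)^2 + ((16/(25*(2*(q:ℝ)-1)) * (2*(q:ℝ)*((q:ℝ)-1))
          - ((q:ℝ) * (Uc q)^2 + ((q:ℝ)-1) * (Vc q)^2)) + (Vc q)^2) := by
    unfold Uc Vc; field_simp [show (q:ℝ)*2-1 ≠ 0 by intro h; exact hD (by linarith)]; ring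
  rw [hfinal]
  have : (4/5:ℝ)^2 = (4/5:ℝ)^2 := rfl
  linarith [hK, hend]
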